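/- If a sequence (𝒟_m)_{m∈ℕ} of gradient discretisations is compact, then it is coercive, i.e. sup_{m∈ℕ} C_{𝒟_m} < ∞. -/

import Mathlib

open NormedSpace Filter Topology

noncomputable section

variable {L Lv : Type*} [NormedAddCommGroup L] [NormedSpace ℝ L]
  [NormedAddCommGroup Lv] [NormedSpace ℝ Lv]

/-- The seminorm `|u|_{L,V} = sup_{μ ∈ V \ {0}} |⟨μ,u⟩| / ‖μ‖` (equal to `0` when `V = {0}`,
since `sSup ∅ = 0` in `ℝ`). -/
noncomputable def semV (V : Submodule ℝ (StrongDual ℝ L)) (u : L) : ℝ :=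
  sSup ((fun μ : StrongDual ℝ L => |μ u| / ‖μ‖) '' {μ : StrongDual ℝ L | μ ∈ V ∧ μ ≠ 0})

/-- `IsWDpair W_G G φ w` says that `φ ∈ 𝐖_D` with `D φ = w`, i.e. the abstract Stokes formula
`⟨φ, G u⟩ + ⟨w, u⟩ = 0` holds for all `u ∈ W_G`. -/
def IsWDpair (WG : Submodule ℝ L) (G : ↥WG →ₗ[ℝ] Lv) (φ : StrongDual ℝ Lv) (w : StrongDual ℝ L) : Prop :=
  ∀ u : ↥WG, φ (G u) + w (u : L) = 0

/-- A gradient discretisation `𝒟 = (X_𝒟, P_𝒟, G_𝒟)`: a finite-dimensional real vector space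
`X`, a function reconstruction `P : X → L` and a gradient reconstruction `Gd : X → Lv`, such
that `v ↦ (|P v|_{L,V}^p + ‖Gd v‖^p)^{1/p}` is a norm on `X` (definiteness is the only
non-automatic condition). -/
structure GradDisc (L Lv : Type*) [NormedAddCommGroup L] [NormedSpace ℝ L]
    [NormedAddCommGroup Lv] [NormedSpace ℝ Lv]
    (V : Submodule ℝ (StrongDual ℝ L)) (p : ℝ) where
  X : Type
  [instAddCommGroup : AddCommGroup X]
  [instModule : Module ℝ X]
  [instFin : FiniteDimensional ℝ X]
  P : X →ₗ[ℝ] L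
  Gd : X →ₗ[ℝ] Lv
  dnorm_definite : ∀ v : X, (semV V (P v) ^ p + ‖Gd v‖ ^ p) ^ (1 / p) = 0 → v = 0

attribute [instance] GradDisc.instAddCommGroup GradDisc.instModule GradDisc.instFin

namespace GradDisc

variable {V : Submodule ℝ (StrongDual ℝ L)} {p : ℝ}

/-- The discrete norm `‖v‖_𝒟 = (|P_𝒟 v|_{L,V}^p + ‖G_𝒟 v‖_Lv^p)^{1/p}`. -/
noncomputable def dnorm (D : GradDisc L Lv V p) (v : D.X) : ℝ :=
  (semV V (D.P v) ^ p + ‖D.Gd v‖ ^ p) ^ (1 / p)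

/-- `C_𝒟 = max_{v ≠ 0} ‖P_𝒟 v‖_L / ‖v‖_𝒟`. -/
noncomputable def CD (D : GradDisc L Lv V p) : ℝ :=
  sSup ((fun v : D.X => ‖D.P v‖ / D.dnorm v) '' {v : D.X | v ≠ 0})

/-- `W_𝒟(φ) = sup_{u ≠ 0} |⟨φ, G_𝒟 u⟩ + ⟨D φ, P_𝒟 u⟩| / ‖u‖_𝒟`, where `w = D φ`. -/
noncomputable def WDdef (D : GradDisc L Lv V p) (φ : StrongDual ℝ Lv) (w : StrongDual ℝ L) : ℝ :=
  sSup ((fun u : D.X => |φ (D.Gd u) + w (D.P u)| / D.dnorm u) '' {u : D.X | u ≠ 0})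

/-- `S_𝒟(φ) = min_v (‖P_𝒟 v − φ‖_L + ‖G_𝒟 v − G φ‖_Lv)`, where `gφ = G φ`. -/
noncomputable def SDdef (D : GradDisc L Lv V p) (φ : L) (gφ : Lv) : ℝ :=
  sInf (Set.range fun v : D.X => ‖D.P v - φ‖ + ‖D.Gd v - gφ‖)

end GradDisc

/-- Coercivity of a sequence of gradient discretisations: `sup_m C_{𝒟_m} < ∞`. -/
def Coercive {V : Submodule ℝ (StrongDual ℝ L)} {p : ℝ} (D : ℕ → GradDisc L Lv V p) : Prop :=
  ∃ C : ℝ, ∀ m : ℕ, (D m).CD ≤ C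

/-- Limit-conformity: `W_{𝒟_m}(φ) → 0` for every `φ ∈ 𝐖_D` (with `w = D φ`). -/
def LimitConforming (WG : Submodule ℝ L) (G : ↥WG →ₗ[ℝ] Lv)
    {V : Submodule ℝ (StrongDual ℝ L)} {p : ℝ} (D : ℕ → GradDisc L Lv V p) : Prop :=
  ∀ (φ : StrongDual ℝ Lv) (w : StrongDual ℝ L), IsWDpair WG G φ w →
    Filter.Tendsto (fun m => (D m).WDdef φ w) Filter.atTop (𝓝 0)

/-- Consistency: `S_{𝒟_m}(φ) → 0` for every `φ ∈ W_G`. -/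
def Consistent (WG : Submodule ℝ L) (G : ↥WG →ₗ[ℝ] Lv)
    {V : Submodule ℝ (StrongDual ℝ L)} {p : ℝ} (D : ℕ → GradDisc L Lv V p) : Prop :=
  ∀ u : ↥WG, Filter.Tendsto (fun m => (D m).SDdef (u : L) (G u)) Filter.atTop (𝓝 0)

/-- Compactness: bounded discrete sequences have relatively compact reconstructions in `L`. -/
def CompactSeq {V : Submodule ℝ (StrongDual ℝ L)} {p : ℝ} (D : ℕ → GradDisc L Lv V p) : Prop :=
  ∀ u : (m : ℕ) → (D m).X, (∃ C : ℝ, ∀ m : ℕ, (D m).dnorm (u m) ≤ C) →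
    IsCompact (closure (Set.range fun m => (D m).P (u m)))



section AuxCoercive

variable {V : Submodule ℝ (StrongDual ℝ L)} {p : ℝ}

private lemma semV_mem_le (V : Submodule ℝ (StrongDual ℝ L)) (u : L) :
    ∀ r ∈ ((fun μ : StrongDual ℝ L => |μ u| / ‖μ‖) '' {μ : StrongDual ℝ L | μ ∈ V ∧ μ ≠ 0}), r ≤ ‖u‖ := by
  rintro r ⟨μ, ⟨-, hμ⟩, rfl⟩
  have h0 : (0:ℝ) < ‖μ‖ := norm_pos_iff.mpr hμ
  rw [div_le_iff₀ h0]
  calc |μ u| = ‖μ u‖ := (Real.norm_eq_abs _).symm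
    _ ≤ ‖μ‖ * ‖u‖ := μ.le_opNorm u
    _ = ‖u‖ * ‖μ‖ := mul_comm _ _

private lemma semV_bddAbove (V : Submodule ℝ (StrongDual ℝ L)) (u : L) :
    BddAbove ((fun μ : StrongDual ℝ L => |μ u| / ‖μ‖) '' {μ : StrongDual ℝ L | μ ∈ V ∧ μ ≠ 0}) :=
  ⟨‖u‖, fun r hr => semV_mem_le V u r hr⟩

private lemma semV_nonneg (V : Submodule ℝ (StrongDual ℝ L)) (u : L) : 0 ≤ semV V u :=
  Real.sSup_nonneg fun r hr => by
    obtain ⟨μ, -, rfl⟩ := hr; positivity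

private lemma semV_le_norm (V : Submodule ℝ (StrongDual ℝ L)) (u : L) : semV V u ≤ ‖u‖ :=
  Real.sSup_le (semV_mem_le V u) (norm_nonneg u)

private lemma semV_add_le (V : Submodule ℝ (StrongDual ℝ L)) (u v : L) :
    semV V (u + v) ≤ semV V u + semV V v := by
  apply Real.sSup_le _ (add_nonneg (semV_nonneg V u) (semV_nonneg V v))
  rintro r ⟨μ, hμ, rfl⟩
  have hμ0 : (0:ℝ) < ‖μ‖ := norm_pos_iff.mpr hμ.2
  have h1 : |μ u| / ‖μ‖ ≤ semV V u := le_csSup (semV_bddAbove V u) ⟨μ, hμ, rfl⟩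
  have h2 : |μ v| / ‖μ‖ ≤ semV V v := le_csSup (semV_bddAbove V v) ⟨μ, hμ, rfl⟩
  have h3 : |μ (u + v)| / ‖μ‖ ≤ |μ u| / ‖μ‖ + |μ v| / ‖μ‖ := by
    rw [map_add, ← add_div]
    exact (div_le_div_iff_of_pos_right hμ0).mpr (abs_add_le _ _)
  linarith

private lemma semV_smul (V : Submodule ℝ (StrongDual ℝ L)) (c : ℝ) (u : L) :
    semV V (c • u) = |c| * semV V u := by
  have h1 : (fun μ : StrongDual ℝ L => |μ (c • u)| / ‖μ‖)
      = (fun r : ℝ => |c| • r) ∘ fun μ : StrongDual ℝ L => |μ u| / ‖μ‖ := by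
    funext μ
    simp [map_smul, smul_eq_mul, abs_mul, mul_div_assoc]
  rw [semV, semV, h1, Set.image_comp, Set.image_smul,
    Real.sSup_smul_of_nonneg (abs_nonneg c), smul_eq_mul]

private lemma semV_zero (V : Submodule ℝ (StrongDual ℝ L)) : semV V (0 : L) = 0 := by
  have h := semV_smul V 0 (0 : L)
  simpa using h

private lemma semV_lipschitz (V : Submodule ℝ (StrongDual ℝ L)) :
    LipschitzWith 1 (semV V : L → ℝ) := by
  apply LipschitzWith.of_dist_le_mul
  intro u v
  rw [Real.dist_eq, dist_eq_norm, NNReal.coe_one, one_mul]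
  have key : ∀ a b : L, semV V a - semV V b ≤ ‖a - b‖ := by
    intro a b
    have h := semV_add_le V (a - b) b
    rw [sub_add_cancel] at h
    have h2 := semV_le_norm V (a - b)
    linarith
  rw [abs_sub_le_iff]
  refine ⟨key u v, ?_⟩
  have h := key v u
  rwa [norm_sub_rev] at h

private lemma dnorm_nonneg (D : GradDisc L Lv V p) (v : D.X) : 0 ≤ D.dnorm v :=
  Real.rpow_nonneg (add_nonneg (Real.rpow_nonneg (semV_nonneg V _) p)
    (Real.rpow_nonneg (norm_nonneg _) p)) _

private lemma dnorm_pos (D : GradDisc L Lv V p) {v : D.X} (hv : v ≠ 0) : 0 < D.dnorm v :=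
  (dnorm_nonneg D v).lt_of_ne fun h => hv (D.dnorm_definite v h.symm)

private lemma dnorm_eq (D : GradDisc L Lv V p) (v : D.X) :
    D.dnorm v = (semV V (D.P v) ^ p + ‖D.Gd v‖ ^ p) ^ (1/p) := rfl

private lemma dnorm_smul (hp : 0 < p) (D : GradDisc L Lv V p) (c : ℝ) (v : D.X) :
    D.dnorm (c • v) = |c| * D.dnorm v := by
  have hc := abs_nonneg c
  have ha := semV_nonneg V (D.P v)
  have hb := norm_nonneg (D.Gd v)
  rw [dnorm_eq, dnorm_eq, map_smul, map_smul, semV_smul, norm_smul, Real.norm_eq_abs,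
    Real.mul_rpow hc ha, Real.mul_rpow hc hb, ← mul_add,
    Real.mul_rpow (Real.rpow_nonneg hc p)
      (add_nonneg (Real.rpow_nonneg ha p) (Real.rpow_nonneg hb p)),
    one_div, Real.rpow_rpow_inv hc hp.ne']

private lemma dnorm_zero (hp : 0 < p) (D : GradDisc L Lv V p) : D.dnorm (0 : D.X) = 0 := by
  have h := dnorm_smul hp D 0 0
  simpa using h

private lemma le_rpow_sum (hp : 1 < p) {a b : ℝ} (ha : 0 ≤ a) (hb : 0 ≤ b) :
    a + b ≤ 2 * (a ^ p + b ^ p) ^ (1/p) := by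
  have hp0 : (0:ℝ) < p := lt_trans one_pos hp
  have h1 : a ≤ (a ^ p + b ^ p) ^ (1/p) := by
    conv_lhs => rw [← Real.rpow_rpow_inv ha hp0.ne']
    rw [one_div]
    exact Real.rpow_le_rpow (Real.rpow_nonneg ha p)
      (le_add_of_nonneg_right (Real.rpow_nonneg hb p)) (by positivity)
  have h2 : b ≤ (a ^ p + b ^ p) ^ (1/p) := by
    conv_lhs => rw [← Real.rpow_rpow_inv hb hp0.ne']
    rw [one_div]
    exact Real.rpow_le_rpow (Real.rpow_nonneg hb p)
      (le_add_of_nonneg_left (Real.rpow_nonneg ha p)) (by positivity)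
  linarith

private lemma rpow_sum_le (hp : 1 < p) {a b : ℝ} (ha : 0 ≤ a) (hb : 0 ≤ b) :
    (a ^ p + b ^ p) ^ (1/p) ≤ 2 * (a + b) := by
  have hp0 : (0:ℝ) < p := lt_trans one_pos hp
  have hab : 0 ≤ a + b := add_nonneg ha hb
  have h1 : a ^ p ≤ (a + b) ^ p := Real.rpow_le_rpow ha (le_add_of_nonneg_right hb) hp0.le
  have h2 : b ^ p ≤ (a + b) ^ p := Real.rpow_le_rpow hb (le_add_of_nonneg_left ha) hp0.le
  calc (a ^ p + b ^ p) ^ (1/p) ≤ (2 * (a + b) ^ p) ^ (1/p) := by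
        apply Real.rpow_le_rpow (by positivity) (by linarith) (by positivity)
    _ = 2 ^ (1/p) * (a + b) := by
        rw [Real.mul_rpow (by norm_num) (Real.rpow_nonneg hab p), one_div,
          Real.rpow_rpow_inv hab hp0.ne']
    _ ≤ 2 * (a + b) := by
        have h3 : (2:ℝ) ^ (1/p) ≤ 2 ^ (1:ℝ) :=
          Real.rpow_le_rpow_of_exponent_le (by norm_num) (by rw [div_le_one hp0]; linarith)
        rw [Real.rpow_one] at h3
        exact mul_le_mul_of_nonneg_right h3 hab

private lemma exists_good (hp : 1 < p) (D : GradDisc L Lv V p) :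
    ∃ w : D.X, D.dnorm w ≤ 4 ∧ ∀ v : D.X, ‖D.P v‖ ≤ ‖D.P w‖ * D.dnorm v := by
  have hp0 : (0:ℝ) < p := lt_trans one_pos hp
  by_cases hX : Subsingleton D.X
  · refine ⟨0, by rw [dnorm_zero hp0]; norm_num, fun v => ?_⟩
    have hv : v = (0 : D.X) := Subsingleton.elim v 0
    subst hv
    simp [dnorm_zero hp0]
  · haveI : Nontrivial D.X := not_subsingleton_iff_nontrivial.mp hX
    set n := Module.finrank ℝ D.X with hn
    haveI : Nonempty (Fin n) := by
      rw [← Fin.pos_iff_nonempty, hn]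
      exact Module.finrank_pos
    let e : D.X ≃ₗ[ℝ] (Fin n → ℝ) := (Module.finBasis ℝ D.X).equivFun
    let T1 : (Fin n → ℝ) →ₗ[ℝ] L := D.P ∘ₗ e.symm.toLinearMap
    let T2 : (Fin n → ℝ) →ₗ[ℝ] Lv := D.Gd ∘ₗ e.symm.toLinearMap
    have hT1 : Continuous T1 := T1.continuous_of_finiteDimensional
    have hT2 : Continuous T2 := T2.continuous_of_finiteDimensional
    set Nf : (Fin n → ℝ) → ℝ := fun x => semV V (T1 x) + ‖T2 x‖ with hNf
    have hNfc : Continuous Nf := (((semV_lipschitz V).continuous).comp hT1).add hT2.norm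
    have hNf0 : Nf 0 = 0 := by simp [hNf, map_zero, semV_zero]
    have hdnorm_eq : ∀ x : Fin n → ℝ,
        D.dnorm (e.symm x) = (semV V (T1 x) ^ p + ‖T2 x‖ ^ p) ^ (1/p) := fun x => rfl
    have hN_le : ∀ x : Fin n → ℝ, Nf x ≤ 2 * D.dnorm (e.symm x) := fun x => by
      rw [hdnorm_eq]; exact le_rpow_sum hp (semV_nonneg V _) (norm_nonneg _)
    have hd_le : ∀ x : Fin n → ℝ, D.dnorm (e.symm x) ≤ 2 * Nf x := fun x => by
      rw [hdnorm_eq]; exact rpow_sum_le hp (semV_nonneg V _) (norm_nonneg _)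
    have hNf_smul : ∀ (t : ℝ) (x : Fin n → ℝ), Nf (t • x) = |t| * Nf x := by
      intro t x
      simp only [hNf, map_smul, semV_smul, norm_smul, Real.norm_eq_abs, mul_add]
    have hNf_pos : ∀ x : Fin n → ℝ, x ≠ 0 → 0 < Nf x := by
      intro x hx
      have hx' : e.symm x ≠ 0 := fun h =>
        hx (e.symm.injective (h.trans (map_zero e.symm).symm))
      have hpos := dnorm_pos D hx'
      have hle := hd_le x
      linarith
    obtain ⟨x₁, hx₁⟩ := exists_norm_eq (Fin n → ℝ) (zero_le_one (α := ℝ))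
    have hS : IsCompact (Metric.sphere (0 : Fin n → ℝ) 1) := isCompact_sphere 0 1
    have hSne : (Metric.sphere (0 : Fin n → ℝ) 1).Nonempty :=
      ⟨x₁, mem_sphere_zero_iff_norm.mpr hx₁⟩
    obtain ⟨xm, hxmS, hxm⟩ := hS.exists_isMinOn hSne hNfc.continuousOn
    have hxm_norm : ‖xm‖ = 1 := mem_sphere_zero_iff_norm.mp hxmS
    have hc_pos : 0 < Nf xm := by
      apply hNf_pos
      intro h
      rw [h] at hxm_norm
      simp at hxm_norm
    set c := Nf xm with hc
    have hlow : ∀ x : Fin n → ℝ, c * ‖x‖ ≤ Nf x := by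
      intro x
      rcases eq_or_ne x 0 with rfl | hx
      · simp [hNf0]
      · have hxn : 0 < ‖x‖ := norm_pos_iff.mpr hx
        have hmem : (‖x‖⁻¹ • x) ∈ Metric.sphere (0 : Fin n → ℝ) 1 := by
          rw [mem_sphere_zero_iff_norm, norm_smul, norm_inv, norm_norm,
            inv_mul_cancel₀ hxn.ne']
        have hmin : c ≤ Nf (‖x‖⁻¹ • x) := hxm hmem
        have h2 : Nf (‖x‖⁻¹ • x) = ‖x‖⁻¹ * Nf x := by
          rw [hNf_smul, abs_inv, abs_norm]
        rw [h2] at hmin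
        have h3 := mul_le_mul_of_nonneg_right hmin hxn.le
        calc c * ‖x‖ ≤ (‖x‖⁻¹ * Nf x) * ‖x‖ := h3
          _ = Nf x := by field_simp
    set K := {x : Fin n → ℝ | Nf x ≤ 2} with hK
    have hKcl : IsClosed K := isClosed_le hNfc continuous_const
    have hKsub : K ⊆ Metric.closedBall 0 (2 / c) := by
      intro x hx
      rw [Metric.mem_closedBall, dist_zero_right, le_div_iff₀ hc_pos]
      have h1 := hlow x
      have h2 : Nf x ≤ 2 := hx
      nlinarith
    have hKcpt : IsCompact K :=
      (isCompact_closedBall (0 : Fin n → ℝ) (2 / c)).of_isClosed_subset hKcl hKsub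
    have hKne : K.Nonempty := ⟨0, by simp only [hK, Set.mem_setOf_eq, hNf0]; norm_num⟩
    obtain ⟨x₀, hx₀K, hx₀⟩ := hKcpt.exists_isMaxOn hKne (hT1.norm.continuousOn)
    refine ⟨e.symm x₀, ?_, ?_⟩
    · have h1 := hd_le x₀
      have h2 : Nf x₀ ≤ 2 := hx₀K
      linarith
    · intro v
      rcases eq_or_ne v 0 with rfl | hv
      · simp [dnorm_zero hp0]
      · set t := D.dnorm v with ht
        have htpos : 0 < t := dnorm_pos D hv
        set x : Fin n → ℝ := t⁻¹ • (e v) with hxdef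
        have hex : e.symm x = t⁻¹ • v := by
          rw [hxdef, map_smul, e.symm_apply_apply]
        have hxK : x ∈ K := by
          show Nf x ≤ 2
          have h1 := hN_le x
          rw [hex, dnorm_smul hp0, abs_inv, abs_of_pos htpos, ← ht,
            inv_mul_cancel₀ htpos.ne'] at h1
          linarith
        have hmax := hx₀ hxK
        have hT1x : ‖T1 x‖ = t⁻¹ * ‖D.P v‖ := by
          show ‖D.P (e.symm x)‖ = _
          rw [hex, map_smul, norm_smul, Real.norm_eq_abs, abs_of_pos (inv_pos.mpr htpos)]
        have hmax' : t⁻¹ * ‖D.P v‖ ≤ ‖D.P (e.symm x₀)‖ := by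
          rw [← hT1x]
          exact hmax
        calc ‖D.P v‖ = (t⁻¹ * ‖D.P v‖) * t := by field_simp
          _ ≤ ‖D.P (e.symm x₀)‖ * t := mul_le_mul_of_nonneg_right hmax' htpos.le

end AuxCoercive

theorem compact_implies_coercive
    [CompleteSpace L] [CompleteSpace Lv]
    [TopologicalSpace.SeparableSpace L] [TopologicalSpace.SeparableSpace Lv]
    (hreflL : Function.Surjective ⇑(inclusionInDoubleDual ℝ L))
    (hreflLv : Function.Surjective ⇑(inclusionInDoubleDual ℝ Lv))
    (WG : Submodule ℝ L) (hWGdense : Dense (WG : Set L))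
    (G : ↥WG →ₗ[ℝ] Lv)
    (hGclosed : IsClosed (Set.range fun u : ↥WG => ((u : L), G u)))
    (p : ℝ) (hp : 1 < p)
    (V : Submodule ℝ (StrongDual ℝ L)) (hVclosed : IsClosed (V : Set (StrongDual ℝ L)))
    (CWGV : ℝ) (hCWGV : 0 < CWGV)
    (hequiv : ∀ u : ↥WG, (‖(u : L)‖ ^ p + ‖G u‖ ^ p) ^ (1 / p) ≤
      CWGV * (semV V (u : L) ^ p + ‖G u‖ ^ p) ^ (1 / p))
    (D : ℕ → GradDisc L Lv V p)
    (hcomp : CompactSeq D) :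
    Coercive D := by
  choose u hu4 humax using fun m => exists_good hp (D m)
  have hcpt := hcomp u ⟨4, hu4⟩
  obtain ⟨C, hC⟩ := isBounded_iff_forall_norm_le.mp hcpt.isBounded
  refine ⟨max C 0, fun m => ?_⟩
  apply Real.sSup_le _ (le_max_right C 0)
  rintro r ⟨v, hv, rfl⟩
  have htpos : 0 < (D m).dnorm v := dnorm_pos (D m) hv
  rw [div_le_iff₀ htpos]
  have h1 := humax m v
  have h2 : ‖(D m).P (u m)‖ ≤ C := hC _ (subset_closure ⟨m, rfl⟩)
  have h3 : C ≤ max C 0 := le_max_left C 0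
  have h4 := mul_le_mul_of_nonneg_right (h2.trans h3) (dnorm_nonneg (D m) v)
  linarith
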